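/- Let q be a prime power, m ≥ 1, and 1 ≤ d < q−2. There exists a vector v ∈ F_q^n of full Hamming weight n = (q^{m+1}−1)/(q−1) such that v is orthogonal (Euclidean inner product) to the evaluation of every homogeneous polynomial of degree d at the standard representatives of the points of P^m. That is, the dual code of the projective Reed–Muller code PRM_d(q,m) contains a vector of Hamming weight n. -/

import Mathlib

open Polynomial Finset IntermediateField

/-- `Q` is the standard representative of a point of `P^m`: its leftmost
nonzero coordinate equals `1`. -/
def IsStdRep {F : Type*} [Field F] {m : ℕ} (Q : Fin (m + 1) → F) : Prop :=
  ∃ i : Fin (m + 1), Q i = 1 ∧ ∀ j : Fin (m + 1), j < i → Q j = 0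

lemma exists_noroot_poly (F : Type*) [Field F] [Fintype F] (e : ℕ) (he : 2 ≤ e) :
    ∃ π : Polynomial F, π.Monic ∧ π.natDegree = e ∧ ∀ t : F, π.eval t ≠ 0 := by
  classical
  obtain ⟨p, hp⟩ := CharP.exists F
  obtain ⟨s, hprime, hcard⟩ := FiniteField.card F p
  haveI : Fact p.Prime := ⟨hprime⟩
  set q := Fintype.card F with hq
  have hq1 : 1 < q := Fintype.one_lt_card
  have hqe1 : 1 < q ^ e := one_lt_pow₀ hq1 (by omega)
  set f : Polynomial F := X ^ (q ^ e) - X with hf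
  set K := f.SplittingField with hK
  haveI : Finite K := Module.finite_of_finite F
  haveI : Fintype K := Fintype.ofFinite K
  haveI : CharP K p := charP_of_injective_algebraMap (algebraMap F K).injective p
  have hpe : p ∣ q ^ e := by
    rw [hcard]; exact dvd_pow (dvd_pow_self p s.2.ne') (by omega)
  have hsep : f.Separable := galois_poly_separable p (q ^ e) hpe
  have hdeg : f.natDegree = q ^ e := FiniteField.X_pow_card_sub_X_natDegree_eq F hqe1
  have hfne : f ≠ 0 := FiniteField.X_pow_card_sub_X_ne_zero F hqe1
  have hqe : q ^ e = p ^ ((s : ℕ) * e) := by rw [hcard, pow_mul]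
  have hfix : ∀ x : K, x ^ (q ^ e) = x := by
    let φ : K →ₐ[F] K :=
      { toRingHom := iterateFrobenius K p ((s : ℕ) * e)
        commutes' := by
          intro r
          show (algebraMap F K r) ^ p ^ ((s : ℕ) * e) = algebraMap F K r
          rw [← map_pow, ← hqe, FiniteField.pow_card_pow] }
    have hsub : Algebra.adjoin F (f.rootSet K) ≤ AlgHom.equalizer φ (AlgHom.id F K) := by
      apply Algebra.adjoin_le
      intro y hy
      rw [mem_rootSet_of_ne hfne] at hy
      have : y ^ (q ^ e) - y = 0 := by
        simpa [hf, map_sub, map_pow, aeval_X] using hy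
      have hy' : y ^ (q ^ e) = y := by linear_combination this
      show φ y = y
      show y ^ p ^ ((s : ℕ) * e) = y
      rwa [← hqe]
    rw [Polynomial.SplittingField.adjoin_rootSet] at hsub
    intro x
    have hx : φ x = x := hsub (by trivial)
    have : x ^ p ^ ((s : ℕ) * e) = x := hx
    rwa [← hqe] at this
  have hcardK : Fintype.card K = q ^ e := by
    have key : Fintype.card (f.rootSet K) = f.natDegree :=
      card_rootSet_eq_natDegree hsep (SplittingField.splits f)
    have huniv : f.rootSet K = Set.univ := by
      rw [Set.eq_univ_iff_forall]
      intro x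
      rw [mem_rootSet_of_ne hfne]
      simp only [hf, map_sub, map_pow, aeval_X]
      rw [hfix x, sub_self]
    have e1 : Fintype.card (f.rootSet K) = Fintype.card K :=
      Fintype.card_congr ((Equiv.setCongr huniv).trans (Equiv.Set.univ K))
    rw [← e1, key, hdeg]
  have hfinrank : Module.finrank F K = e := by
    have := Module.card_eq_pow_finrank (K := F) (V := K)
    rw [hcardK, ← hq] at this
    exact (Nat.pow_right_injective hq1 this.symm)
  obtain ⟨α, hα⟩ := Field.exists_primitive_element_of_finite_bot F K
  have hint : IsIntegral F α := IsIntegral.of_finite F α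
  refine ⟨minpoly F α, minpoly.monic hint, ?_, ?_⟩
  · have h1 : Module.finrank F F⟮α⟯ = (minpoly F α).natDegree :=
      IntermediateField.adjoin.finrank hint
    rw [hα] at h1
    rw [← h1, IntermediateField.finrank_top', hfinrank]
  · intro t ht
    have hroot : (minpoly F α).IsRoot t := ht
    have hdeg1 : (minpoly F α).degree = 1 :=
      degree_eq_one_of_irreducible_of_root (minpoly.irreducible hint) hroot
    have h2 : (minpoly F α).natDegree = 1 := natDegree_eq_of_degree_eq_some hdeg1
    have h1 : Module.finrank F F⟮α⟯ = (minpoly F α).natDegree :=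
      IntermediateField.adjoin.finrank hint
    rw [hα, IntermediateField.finrank_top', hfinrank] at h1
    omega

lemma sum_pow_card_sub_one (F : Type*) [Field F] [Fintype F] :
    ∑ t : F, t ^ (Fintype.card F - 1) = -1 := by
  classical
  have hq1 : 1 < Fintype.card F := Fintype.one_lt_card
  rw [← Finset.sum_erase_add _ _ (Finset.mem_univ (0 : F))]
  rw [zero_pow (by omega), add_zero]
  have h1 : ∀ t ∈ Finset.univ.erase (0:F), t ^ (Fintype.card F - 1) = 1 := by
    intro t ht
    exact FiniteField.pow_card_sub_one_eq_one t (Finset.ne_of_mem_erase ht)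
  rw [Finset.sum_congr rfl h1, Finset.sum_const, Finset.card_erase_of_mem (mem_univ _),
    Finset.card_univ, nsmul_eq_mul, mul_one]
  have h2 : ((Fintype.card F - 1 : ℕ) : F) = (Fintype.card F : F) - 1 := by
    rw [Nat.cast_sub (by omega), Nat.cast_one]
  rw [h2, FiniteField.cast_card_eq_zero, zero_sub]

lemma moment_eq {F : Type*} [Field F] [Fintype F] {d : ℕ} (hd1 : 1 ≤ d)
    (hd2 : d < Fintype.card F - 2)
    (π : Polynomial F) (hmonic : π.Monic) (hdeg : π.natDegree = Fintype.card F - 1 - d)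
    (k : ℕ) (hk : k ≤ d) :
    ∑ t : F, π.eval t * t ^ k = if k = d then -1 else 0 := by
  classical
  set q := Fintype.card F with hq
  have hq4 : 4 ≤ q := by omega
  set e := q - 1 - d with he
  have hed : e + d = q - 1 := by omega
  have step1 : ∑ t : F, π.eval t * t ^ k
      = ∑ j ∈ range (e + 1), π.coeff j * ∑ t : F, t ^ (j + k) := by
    have h0 : ∀ t : F, π.eval t = ∑ j ∈ range (e + 1), π.coeff j * t ^ j := by
      intro t
      rw [← hdeg]
      exact Polynomial.eval_eq_sum_range _
    calc ∑ t : F, π.eval t * t ^ k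
        = ∑ t : F, ∑ j ∈ range (e + 1), π.coeff j * t ^ j * t ^ k := by
          refine Finset.sum_congr rfl fun t _ => ?_
          rw [h0 t, Finset.sum_mul]
      _ = ∑ j ∈ range (e + 1), ∑ t : F, π.coeff j * t ^ j * t ^ k := Finset.sum_comm
      _ = ∑ j ∈ range (e + 1), π.coeff j * ∑ t : F, t ^ (j + k) := by
          refine Finset.sum_congr rfl fun j _ => ?_
          rw [Finset.mul_sum]
          refine Finset.sum_congr rfl fun t _ => ?_
          rw [mul_assoc, pow_add]
  rw [step1]
  have step2 : ∀ j ∈ range (e + 1), π.coeff j * ∑ t : F, t ^ (j + k)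
      = if j = e ∧ k = d then -1 else 0 := by
    intro j hj
    rw [Finset.mem_range] at hj
    by_cases h : j = e ∧ k = d
    · rw [if_pos h, h.1, h.2, hed, sum_pow_card_sub_one]
      have : π.coeff e = 1 := by
        rw [← hdeg]; exact hmonic.coeff_natDegree
      rw [this, one_mul]
    · rw [if_neg h]
      have hlt : j + k < q - 1 := by omega
      rw [FiniteField.sum_pow_lt_card_sub_one F _ hlt, mul_zero]
  rw [Finset.sum_congr rfl step2]
  by_cases hkd : k = d
  · rw [if_pos hkd]
    simp only [hkd, and_true]
    rw [Finset.sum_ite_eq' (range (e + 1)) e fun _ => (-1 : F)]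
    rw [if_pos (Finset.mem_range.mpr (by omega))]
  · rw [if_neg hkd]
    apply Finset.sum_eq_zero
    intro j _
    rw [if_neg (fun hand => hkd hand.2)]

open Classical in
noncomputable def stdWeight {F : Type*} [Field F] (m : ℕ) (π : Polynomial F)
    (Q : Fin (m + 1) → F) : F :=
  if ∀ j : Fin (m + 1), j < Fin.last m → Q j = 0 then 1
  else if ∀ j : Fin (m + 1), (j : ℕ) < m - 1 → Q j = 0 then π.eval (Q (Fin.last m))
  else 1

lemma stdWeight_ne_zero {F : Type*} [Field F] {m : ℕ} (π : Polynomial F)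
    (hπ : ∀ t : F, π.eval t ≠ 0) (Q : Fin (m + 1) → F) : stdWeight m π Q ≠ 0 := by
  unfold stdWeight
  split_ifs with h1 h2
  · exact one_ne_zero
  · exact hπ _
  · exact one_ne_zero

open Classical in
lemma monomial_sum_eq_zero {F : Type*} [Field F] [Fintype F] {m d : ℕ} (hm : 1 ≤ m)
    (hd1 : 1 ≤ d) (hd2 : d < Fintype.card F - 2)
    (π : Polynomial F) (hmonic : π.Monic) (hdeg : π.natDegree = Fintype.card F - 1 - d)
    (α : Fin (m + 1) → ℕ) (hα : ∑ i, α i = d) :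
    ∑ Q ∈ Finset.univ.filter (fun Q : Fin (m + 1) → F => IsStdRep Q),
      stdWeight m π Q * ∏ j, Q j ^ α j = 0 := by
  classical
  have hq4 : 4 ≤ Fintype.card F := by omega
  set L : Fin (m + 1) := Fin.last m with hLdef
  set P : Fin (m + 1) := ⟨m - 1, by omega⟩ with hPdef
  have hPLval : (P : ℕ) = m - 1 := rfl
  have hLval : (L : ℕ) = m := rfl
  have hPL : P < L := by rw [Fin.lt_def, hPLval, hLval]; omega
  have hPne : P ≠ L := ne_of_lt hPL
  have hαle : ∀ j, α j ≤ d :=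
    fun j => hα ▸ Finset.single_le_sum (f := fun i => α i) (fun i _ => Nat.zero_le _) (mem_univ j)
  have huniv : (univ : Finset (Fin (m + 1)))
      = insert L (insert P (univ.filter (fun j => j < P))) := by
    ext j
    have hj := j.isLt
    simp only [mem_insert, mem_filter, mem_univ, true_and, true_iff, iff_true]
    by_cases h1 : (j : ℕ) < m - 1
    · exact Or.inr (Or.inr (by rw [Fin.lt_def, hPLval]; exact h1))
    · by_cases h2 : (j : ℕ) = m - 1
      · exact Or.inr (Or.inl (Fin.ext (by rw [h2, hPLval])))
      · exact Or.inl (Fin.ext (by rw [hLval]; omega))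
  have hLni : L ∉ insert P (univ.filter (fun j => j < P)) := by
    intro hmem
    rcases Finset.mem_insert.mp hmem with h | h
    · exact hPne h.symm
    · exact absurd (Finset.mem_filter.mp h).2 (asymm hPL)
  have hPni : P ∉ univ.filter (fun j => j < P) := by
    simp [Finset.mem_filter]
  have hsplitS : ∀ g : Fin (m + 1) → F,
      ∑ i, g i = g L + (g P + ∑ i ∈ univ.filter (fun j => j < P), g i) := by
    intro g
    conv_lhs => rw [huniv]
    rw [Finset.sum_insert hLni, Finset.sum_insert hPni]
  have hsplitP : ∀ g : Fin (m + 1) → F,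
      ∏ j, g j = g L * (g P * ∏ j ∈ univ.filter (fun j => j < P), g j) := by
    intro g
    conv_lhs => rw [huniv]
    rw [Finset.prod_insert hLni, Finset.prod_insert hPni]
  -- strata
  set S : Fin (m + 1) → Finset (Fin (m + 1) → F) :=
    fun i => univ.filter (fun Q => Q i = 1 ∧ ∀ j, j < i → Q j = 0) with hS
  have hbiU : univ.filter (fun Q : Fin (m + 1) → F => IsStdRep Q) = univ.biUnion S := by
    ext Q; rw [Finset.mem_filter]; simp [IsStdRep, hS]
  have hdisj : Set.PairwiseDisjoint ((univ : Finset (Fin (m + 1))) : Set (Fin (m + 1))) S := by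
    intro i _ i' _ hne
    refine Finset.disjoint_left.mpr ?_
    intro Q hQ hQ'
    simp only [hS, mem_filter, mem_univ, true_and] at hQ hQ'
    rcases lt_or_gt_of_ne hne with h | h
    · have h0 := hQ'.2 i h
      rw [hQ.1] at h0
      exact one_ne_zero h0
    · have h0 := hQ.2 i' h
      rw [hQ'.1] at h0
      exact one_ne_zero h0
  rw [hbiU, Finset.sum_biUnion hdisj]
  -- per-coordinate weights
  set w : Fin (m + 1) → Fin (m + 1) → F → F := fun i j t =>
    if j < i then (if t = 0 then (0 : F) ^ α j else 0)
    else if j = i then (if t = 1 then 1 else 0)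
    else if i = P ∧ j = L then π.eval t * t ^ α j else t ^ α j
    with hw
  have hstrat : ∀ i, ∑ Q ∈ S i, stdWeight m π Q * ∏ j, Q j ^ α j
      = ∏ j, ∑ t : F, w i j t := by
    intro i
    rw [hS]
    simp only
    rw [Finset.sum_filter]
    have hpt : ∀ Q : Fin (m + 1) → F,
        (if Q i = 1 ∧ ∀ j, j < i → Q j = 0 then stdWeight m π Q * ∏ j, Q j ^ α j else 0)
          = ∏ j, w i j (Q j) := by
      intro Q
      by_cases hc : Q i = 1 ∧ ∀ j, j < i → Q j = 0
      · rw [if_pos hc]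
        have hvv : stdWeight m π Q = if i = P then π.eval (Q L) else 1 := by
          by_cases hiL : i = L
          · have h1 : ∀ j : Fin (m + 1), j < Fin.last m → Q j = 0 := by
              intro j hj
              exact hc.2 j (by rw [hiL]; exact hj)
            rw [stdWeight, if_pos h1, if_neg (by rw [hiL]; exact hPne.symm)]
          · have hiltL : i < L := lt_of_le_of_ne (Fin.le_last i) hiL
            have h1 : ¬ ∀ j : Fin (m + 1), j < Fin.last m → Q j = 0 := by
              intro hall
              have h0 := hall i hiltL
              rw [hc.1] at h0
              exact one_ne_zero h0
            by_cases hiP : i = P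
            · have h2 : ∀ j : Fin (m + 1), (j : ℕ) < m - 1 → Q j = 0 := by
                intro j hj
                exact hc.2 j (by rw [Fin.lt_def, hiP, hPLval]; exact hj)
              rw [stdWeight, if_neg h1, if_pos h2, if_pos hiP]
            · have h2 : ¬ ∀ j : Fin (m + 1), (j : ℕ) < m - 1 → Q j = 0 := by
                intro hall
                have hiv : (i : ℕ) < m - 1 := by
                  have h3 : (i : ℕ) < m := by
                    have := Fin.lt_def.mp hiltL
                    rwa [hLval] at this
                  have h4 : (i : ℕ) ≠ m - 1 := by
                    intro h
                    exact hiP (Fin.ext (by rw [h, hPLval]))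
                  omega
                have h0 := hall i hiv
                rw [hc.1] at h0
                exact one_ne_zero h0
              rw [stdWeight, if_neg h1, if_neg h2, if_neg hiP]
        have hfac : ∀ j : Fin (m + 1),
            w i j (Q j) = (if i = P ∧ j = L then π.eval (Q L) else 1) * Q j ^ α j := by
          intro j
          rcases lt_trichotomy j i with h | h | h
          · have hjL : j ≠ L := ne_of_lt (lt_of_lt_of_le h (Fin.le_last i))
            simp only [hw]
            simp [h, hc.2 j h, hjL]
          · subst h
            have hand : ¬ (j = P ∧ j = L) := fun hand => hPne (by rw [← hand.1, hand.2])
            simp only [hw]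
            simp [lt_irrefl, hc.1, hand]
          · have h1 : ¬ j < i := asymm h
            have h2 : j ≠ i := ne_of_gt h
            simp only [hw]
            rw [if_neg h1, if_neg h2]
            by_cases hand : i = P ∧ j = L
            · rw [if_pos hand, if_pos hand, hand.2]
            · rw [if_neg hand, if_neg hand, one_mul]
        calc stdWeight m π Q * ∏ j, Q j ^ α j
            = (∏ j, (if i = P ∧ j = L then π.eval (Q L) else 1)) * ∏ j, Q j ^ α j := by
              rw [hvv]
              congr 1
              by_cases hiP : i = P
              · simp [hiP]
              · simp [hiP]
          _ = ∏ j, ((if i = P ∧ j = L then π.eval (Q L) else 1) * Q j ^ α j) :=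
              (Finset.prod_mul_distrib).symm
          _ = ∏ j, w i j (Q j) := Finset.prod_congr rfl fun j _ => (hfac j).symm
      · rw [if_neg hc]
        push_neg at hc
        by_cases hQi : Q i = 1
        · obtain ⟨j, hj, hQj⟩ := hc hQi
          symm
          apply Finset.prod_eq_zero (mem_univ j)
          simp only [hw]
          simp [hj, hQj]
        · symm
          apply Finset.prod_eq_zero (mem_univ i)
          simp only [hw]
          simp [lt_irrefl, hQi]
    rw [Finset.sum_congr rfl fun Q _ => hpt Q]
    rw [show (univ : Finset (Fin (m + 1) → F)) = Fintype.piFinset (fun _ => univ) from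
      (Fintype.piFinset_univ).symm]
    exact (Finset.prod_univ_sum _ _).symm
  -- coordinate sums
  have hs0 : ∀ a : ℕ, ∑ t : F, (if t = 0 then (0 : F) ^ a else 0) = 0 ^ a := by
    intro a; simp
  have hs1 : ∑ t : F, (if t = (1 : F) then (1 : F) else 0) = 1 := by simp
  have hs2 : ∀ a : ℕ, a ≤ d → ∑ t : F, t ^ a = 0 := by
    intro a ha
    exact FiniteField.sum_pow_lt_card_sub_one F a (by omega)
  set A : F := ∏ j ∈ univ.filter (fun j => j < P), (0 : F) ^ α j with hA
  -- strata values
  have hTi : ∀ i ∈ univ.filter (fun j => j < P), (∏ j, ∑ t : F, w i j t) = 0 := by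
    intro i hi
    rw [mem_filter] at hi
    have hiP : i < P := hi.2
    apply Finset.prod_eq_zero (mem_univ L)
    have hwL : ∀ t : F, w i L t = t ^ α L := by
      intro t
      simp only [hw]
      rw [if_neg (asymm (lt_trans hiP hPL)), if_neg (ne_of_gt (lt_trans hiP hPL))]
      simp [(ne_of_lt hiP : i ≠ P)]
    rw [Finset.sum_congr rfl fun t _ => hwL t]
    exact hs2 (α L) (hαle L)
  have hTP : (∏ j, ∑ t : F, w P j t) = (if α L = d then -1 else 0) * (1 * A) := by
    have e1 : ∑ t : F, w P L t = (if α L = d then -1 else 0) := by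
      have hwL : ∀ t : F, w P L t = π.eval t * t ^ α L := by
        intro t
        simp only [hw]
        rw [if_neg (asymm hPL), if_neg hPne.symm]
        simp
      rw [Finset.sum_congr rfl fun t _ => hwL t]
      exact moment_eq hd1 hd2 π hmonic hdeg (α L) (hαle L)
    have e2 : ∑ t : F, w P P t = 1 := by
      have hwP : ∀ t : F, w P P t = (if t = (1 : F) then (1 : F) else 0) := by
        intro t
        simp only [hw]
        simp [lt_irrefl]
      rw [Finset.sum_congr rfl fun t _ => hwP t]
      exact hs1
    have e3 : ∏ j ∈ univ.filter (fun j => j < P), (∑ t : F, w P j t) = A := by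
      apply Finset.prod_congr rfl
      intro j hj
      rw [mem_filter] at hj
      have hwj : ∀ t : F, w P j t = (if t = 0 then (0 : F) ^ α j else 0) := by
        intro t
        simp only [hw]
        rw [if_pos hj.2]
      rw [Finset.sum_congr rfl fun t _ => hwj t]
      exact hs0 (α j)
    rw [hsplitP, e1, e2, e3]
  have hTL : (∏ j, ∑ t : F, w L j t) = 1 * ((0 : F) ^ α P * A) := by
    have e1 : ∑ t : F, w L L t = 1 := by
      have hwL : ∀ t : F, w L L t = (if t = (1 : F) then (1 : F) else 0) := by
        intro t
        simp only [hw]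
        simp [lt_irrefl]
      rw [Finset.sum_congr rfl fun t _ => hwL t]
      exact hs1
    have e2 : ∑ t : F, w L P t = (0 : F) ^ α P := by
      have hwP : ∀ t : F, w L P t = (if t = 0 then (0 : F) ^ α P else 0) := by
        intro t
        simp only [hw]
        rw [if_pos hPL]
      rw [Finset.sum_congr rfl fun t _ => hwP t]
      exact hs0 (α P)
    have e3 : ∏ j ∈ univ.filter (fun j => j < P), (∑ t : F, w L j t) = A := by
      apply Finset.prod_congr rfl
      intro j hj
      rw [mem_filter] at hj
      have hwj : ∀ t : F, w L j t = (if t = 0 then (0 : F) ^ α j else 0) := by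
        intro t
        simp only [hw]
        rw [if_pos (lt_trans hj.2 hPL)]
      rw [Finset.sum_congr rfl fun t _ => hwj t]
      exact hs0 (α j)
    rw [hsplitP, e1, e2, e3]
  -- combine
  rw [hsplitS]
  rw [hstrat L, hstrat P, hTL, hTP]
  rw [Finset.sum_congr rfl (fun i hi => by rw [hstrat i, hTi i hi])]
  rw [Finset.sum_const, smul_zero]
  by_cases hald : α L = d
  · have hrest : ∀ j, j ≠ L → α j = 0 := by
      intro j hjL
      by_contra hj0
      have h1 : α L + α j ≤ ∑ i, α i := by
        rw [← Finset.sum_pair hjL.symm]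
        exact Finset.sum_le_sum_of_subset (fun x hx => mem_univ x)
      omega
    have hαP : α P = 0 := hrest P hPne
    rw [hald, hαP, if_pos rfl, pow_zero]
    ring
  · rw [if_neg hald]
    have h2 : (0 : F) ^ α P * A = 0 := by
      have hex : ∃ j : Fin (m + 1), j ≠ L ∧ α j ≠ 0 := by
        by_contra hno
        push_neg at hno
        have h3 : ∑ i, α i = α L := by
          apply Finset.sum_eq_single_of_mem L (mem_univ L)
          intro b _ hb
          exact hno b hb
        omega
      obtain ⟨j, hjL, hj0⟩ := hex
      have hjlt : j = P ∨ j < P := by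
        have hjm := j.isLt
        have hjne : (j : ℕ) ≠ m := fun h => hjL (Fin.ext (by rw [h, hLval]))
        rcases Nat.lt_or_ge (j : ℕ) (m - 1) with h | h
        · exact Or.inr (by rw [Fin.lt_def, hPLval]; exact h)
        · exact Or.inl (Fin.ext (by rw [hPLval]; omega))
      rcases hjlt with rfl | hlt
      · rw [zero_pow hj0, zero_mul]
      · have hA0 : A = 0 :=
          Finset.prod_eq_zero (mem_filter.mpr ⟨mem_univ j, hlt⟩) (zero_pow hj0)
        rw [hA0, mul_zero]
    rw [h2]
    ring

/-- For `1 ≤ d < q - 2`, there is a vector `v` of full Hamming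
weight (all coordinates nonzero) in the dual of the projective Reed–Muller
code `PRM_d(q,m)`: it is Euclidean-orthogonal to the evaluation of every
homogeneous polynomial of degree `d` at the standard representatives. -/
theorem dual_PRM_has_full_weight_vector (F : Type*) [Field F] [Fintype F]
    (m d : ℕ) (hm : 1 ≤ m) (hd1 : 1 ≤ d) (hd2 : d < Fintype.card F - 2) :
    ∃ v : (Fin (m + 1) → F) → F,
      (∀ Q : Fin (m + 1) → F, IsStdRep Q → v Q ≠ 0) ∧
      (∀ f : MvPolynomial (Fin (m + 1)) F, f.IsHomogeneous d →
        ∑ᶠ Q ∈ {Q : Fin (m + 1) → F | IsStdRep Q},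
          v Q * MvPolynomial.eval Q f = 0) := by
  classical
  have hq4 : 4 ≤ Fintype.card F := by omega
  have he : 2 ≤ Fintype.card F - 1 - d := by omega
  obtain ⟨π, hmonic, hdeg, hroot⟩ := exists_noroot_poly F _ he
  refine ⟨stdWeight m π, fun Q _ => stdWeight_ne_zero π hroot Q, ?_⟩
  intro f hf
  have hset : {Q : Fin (m + 1) → F | IsStdRep Q}
      = ↑(Finset.univ.filter fun Q : Fin (m + 1) → F => IsStdRep Q) := by
    ext Q; simp
  rw [hset, finsum_mem_coe_finset]
  calc ∑ Q ∈ Finset.univ.filter (fun Q : Fin (m + 1) → F => IsStdRep Q),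
        stdWeight m π Q * MvPolynomial.eval Q f
      = ∑ Q ∈ Finset.univ.filter (fun Q : Fin (m + 1) → F => IsStdRep Q),
          ∑ α ∈ f.support, stdWeight m π Q * (f.coeff α * ∏ i, Q i ^ α i) := by
        refine Finset.sum_congr rfl fun Q _ => ?_
        rw [MvPolynomial.eval_eq', Finset.mul_sum]
    _ = ∑ α ∈ f.support, ∑ Q ∈ Finset.univ.filter (fun Q : Fin (m + 1) → F => IsStdRep Q),
          stdWeight m π Q * (f.coeff α * ∏ i, Q i ^ α i) := Finset.sum_comm
    _ = ∑ α ∈ f.support, f.coeff α * ∑ Q ∈ Finset.univ.filter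
          (fun Q : Fin (m + 1) → F => IsStdRep Q), stdWeight m π Q * ∏ i, Q i ^ α i := by
        refine Finset.sum_congr rfl fun α _ => ?_
        rw [Finset.mul_sum]
        refine Finset.sum_congr rfl fun Q _ => ?_
        ring
    _ = 0 := by
        apply Finset.sum_eq_zero
        intro α hαs
        have hcoeff : MvPolynomial.coeff α f ≠ 0 := MvPolynomial.mem_support_iff.mp hαs
        have hwt := hf hcoeff
        have hsum : ∑ i, α i = d := by
          rw [Finsupp.weight_apply] at hwt
          rw [← hwt]
          rw [Finsupp.sum_fintype _ _ (fun i => by simp)]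
          simp
        rw [monomial_sum_eq_zero hm hd1 hd2 π hmonic hdeg (fun i => α i) hsum, mul_zero]
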